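/- arXiv:2511.06560 — 6 statements merged into one kernel-verified Lean document; each statement's English description precedes it below -/
import Mathlib

section
/- Let X be a real Hilbert space and L : X → X a linear nonexpansive operator. Then the fixed point set of L equals the orthogonal complement of the closure of the range of Id − L, i.e., Fix L = (cl ran(Id − L))^⊥. -/
lemma fix_of_adjoint_fix {X : Type*} [NormedAddCommGroup X] [InnerProductSpace ℝ X]
    [CompleteSpace X] (L : X →L[ℝ] X) (hL : ‖L‖ ≤ 1) {x : X}
    (hx : ContinuousLinearMap.adjoint L x = x) : L x = x := by
  have hinner : (inner ℝ (L x) x : ℝ) = ‖x‖ ^ 2 := by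
    rw [← ContinuousLinearMap.adjoint_inner_right, hx, real_inner_self_eq_norm_sq]
  have hnorm : ‖L x‖ ≤ ‖x‖ := by
    calc ‖L x‖ ≤ ‖L‖ * ‖x‖ := L.le_opNorm x
    _ ≤ 1 * ‖x‖ := by nlinarith [norm_nonneg x]
    _ = ‖x‖ := one_mul _
  have hexp : ‖L x - x‖ ^ 2 = ‖L x‖ ^ 2 - 2 * (inner ℝ (L x) x : ℝ) + ‖x‖ ^ 2 := by
    rw [← real_inner_self_eq_norm_sq, ← real_inner_self_eq_norm_sq,
      ← real_inner_self_eq_norm_sq, inner_sub_sub_self, real_inner_comm x (L x)]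
    ring
  have hz : ‖L x - x‖ = 0 := by
    nlinarith [norm_nonneg (L x - x), norm_nonneg (L x), norm_nonneg x]
  exact sub_eq_zero.mp (norm_eq_zero.mp hz)

theorem stmt_1 {X : Type*} [NormedAddCommGroup X] [InnerProductSpace ℝ X]
    [CompleteSpace X] (L : X →L[ℝ] X) (hL : ∀ x : X, ‖L x‖ ≤ ‖x‖) :
    {x : X | L x = x} =
      ((LinearMap.range ((ContinuousLinearMap.id ℝ X - L : X →L[ℝ] X) :
          X →ₗ[ℝ] X)).topologicalClosureᗮ : Set X) := by
  have hLnorm : ‖L‖ ≤ 1 := L.opNorm_le_bound zero_le_one (by simpa using hL)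
  have hadjnorm : ‖ContinuousLinearMap.adjoint L‖ ≤ 1 := by
    calc ‖ContinuousLinearMap.adjoint L‖ = ‖L‖ :=
          LinearIsometryEquiv.norm_map ContinuousLinearMap.adjoint L
    _ ≤ 1 := hLnorm
  set K := LinearMap.range ((ContinuousLinearMap.id ℝ X - L : X →L[ℝ] X) : X →ₗ[ℝ] X)
  have hclo : K.topologicalClosureᗮ = Kᗮ := by
    conv_lhs => rw [← K.orthogonal_orthogonal_eq_closure]
    exact K.triorthogonal_eq_orthogonal
  ext x
  simp only [Set.mem_setOf_eq, SetLike.mem_coe, hclo, Submodule.mem_orthogonal]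
  constructor
  · intro hfix y hy
    obtain ⟨z, rfl⟩ := hy
    have hadjx : ContinuousLinearMap.adjoint L x = x := by
      apply fix_of_adjoint_fix (ContinuousLinearMap.adjoint L) hadjnorm
      simpa [ContinuousLinearMap.adjoint_adjoint] using hfix
    simp only [ContinuousLinearMap.coe_coe, ContinuousLinearMap.sub_apply,
      ContinuousLinearMap.id_apply]
    rw [inner_sub_left, ← ContinuousLinearMap.adjoint_inner_right, hadjx, sub_self]
  · intro h
    have hadj : ContinuousLinearMap.adjoint L x = x := by
      have key : ∀ z : X, (inner ℝ z (x - ContinuousLinearMap.adjoint L x) : ℝ) = 0 := by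
        intro z
        have h1 := h (z - L z) ⟨z, by simp⟩
        rw [inner_sub_left] at h1
        rw [inner_sub_right, ContinuousLinearMap.adjoint_inner_right]
        linarith
      have h2 := key (x - ContinuousLinearMap.adjoint L x)
      rw [real_inner_self_eq_norm_sq] at h2
      have h3 : x - ContinuousLinearMap.adjoint L x = 0 :=
        norm_eq_zero.mp (by nlinarith [norm_nonneg (x - ContinuousLinearMap.adjoint L x)])
      exact (sub_eq_zero.mp h3).symm
    exact fix_of_adjoint_fix L hLnorm hadj
end

section
/- In the setting of the inertial iteration x_{k+1} = T(x_k + r_k), r_{k+1} = α_k(x_{k+1} − x_k) with r_0 = 0 and T x = L x + q affine with Fix T ≠ ∅, the sequence (r_k) lies in ran(Id − L), and so does the sequence s_k := Σ_{n=1}^{k} L^n r_{k−n}. -/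
theorem stmt_10 {X : Type*} [NormedAddCommGroup X] [InnerProductSpace ℝ X]
    [CompleteSpace X] (L : X →L[ℝ] X) (hL : ∀ x : X, ‖L x‖ ≤ ‖x‖)
    (q : X) (T : X → X) (hT : ∀ x, T x = L x + q) (hfix : ∃ x : X, T x = x)
    (α : ℕ → ℝ) (x r : ℕ → X) (hr0 : r 0 = 0)
    (hx : ∀ k, x (k + 1) = T (x k + r k))
    (hr : ∀ k, r (k + 1) = α k • (x (k + 1) - x k)) :
    (∀ k, r k ∈ Set.range (fun z : X => z - L z)) ∧
    (∀ k, (∑ n ∈ Finset.Icc 1 k, (L ^ n) (r (k - n))) ∈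
        Set.range (fun z : X => z - L z)) := by
  obtain ⟨p, hp⟩ := hfix
  rw [hT p] at hp
  set S : Set X := Set.range (fun z : X => z - L z) with hSdef
  have hmemL : ∀ a ∈ S, L a ∈ S := by
    rintro _ ⟨z, rfl⟩; exact ⟨L z, by simp [map_sub]⟩
  have hadd : ∀ a ∈ S, ∀ b ∈ S, a + b ∈ S := by
    rintro _ ⟨z, rfl⟩ _ ⟨w, rfl⟩
    exact ⟨z + w, by simp only [map_add]; abel⟩
  have hzero : (0 : X) ∈ S := ⟨0, by simp⟩
  have hsmul : ∀ (c : ℝ), ∀ a ∈ S, c • a ∈ S := by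
    rintro c _ ⟨z, rfl⟩; exact ⟨c • z, by simp [smul_sub]⟩
  have hq0 : p - L p = q := by rw [sub_eq_iff_eq_add, add_comm]; exact hp.symm
  have hq : q ∈ S := ⟨p, hq0⟩
  have hrS : ∀ k, r k ∈ S := by
    intro k
    induction k with
    | zero => rw [hr0]; exact hzero
    | succ k ih =>
      rw [hr k]
      apply hsmul
      have hx1 : x (k + 1) - x k = L (r k) + q + (-1 : ℝ) • (x k - L (x k)) := by
        rw [hx k, hT, map_add]; simp; abel
      rw [hx1]
      exact hadd _ (hadd _ (hmemL _ ih) _ hq) _ (hsmul (-1) _ ⟨x k, rfl⟩)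
  refine ⟨hrS, fun k => ?_⟩
  have hpow : ∀ n : ℕ, ∀ a ∈ S, (L ^ n) a ∈ S := by
    intro n
    induction n with
    | zero => intro a ha; simpa using ha
    | succ n ih =>
      intro a ha
      rw [pow_succ]
      exact ih _ (hmemL _ ha)
  exact Finset.sum_induction _ (· ∈ S) (fun a b ha hb => hadd a ha b hb) hzero
    (fun n _ => hpow n _ (hrS _))
end

section
/- In the setting of the inertial affine iteration with Fix T ≠ ∅, the metric projection onto Fix T of the iterate x_k equals the projection of the plain Picard iterate: P_{Fix T} x_k = P_{Fix T}(T^k x_0) for all k ∈ ℕ. -/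
open scoped RealInnerProductSpace

theorem stmt_11 {X : Type*} [NormedAddCommGroup X] [InnerProductSpace ℝ X]
    [CompleteSpace X] (L : X →L[ℝ] X) (hL : ∀ x : X, ‖L x‖ ≤ ‖x‖)
    (q : X) (T : X → X) (hT : ∀ x, T x = L x + q) (hfix : ∃ x : X, T x = x)
    (α : ℕ → ℝ) (x r : ℕ → X) (hr0 : r 0 = 0)
    (hx : ∀ k, x (k + 1) = T (x k + r k))
    (hr : ∀ k, r (k + 1) = α k • (x (k + 1) - x k)) :
    ∀ k, ∀ z : X,
      ((T z = z ∧ ∀ w : X, T w = w → ‖x k - z‖ ≤ ‖x k - w‖) ↔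
       (T z = z ∧ ∀ w : X, T w = w → ‖T^[k] (x 0) - z‖ ≤ ‖T^[k] (x 0) - w‖)) := by
  obtain ⟨z₀, hz₀⟩ := hfix
  have hz₀' : L z₀ + q = z₀ := by rw [← hT]; exact hz₀
  have hLnorm : ‖L‖ ≤ 1 := L.opNorm_le_bound zero_le_one (by simpa using hL)
  -- fixed points of L are fixed by the adjoint, hence ⟪v, L u⟫ = ⟪v, u⟫
  have hadj : ∀ v : X, L v = v → ∀ u : X, ⟪v, L u⟫ = ⟪v, u⟫ := by
    intro v hv u
    set A := ContinuousLinearMap.adjoint L with hA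
    have hAv : A v = v := by
      have h1 : ‖A v‖ ≤ ‖v‖ := by
        calc ‖A v‖ ≤ ‖A‖ * ‖v‖ := A.le_opNorm v
          _ ≤ 1 * ‖v‖ := mul_le_mul_of_nonneg_right
              (by rw [hA, ContinuousLinearMap.adjoint.norm_map]; exact hLnorm) (norm_nonneg v)
          _ = ‖v‖ := one_mul _
      have hiv : ⟪A v, v⟫ = ‖v‖ ^ 2 := by
        rw [hA, ContinuousLinearMap.adjoint_inner_left, hv, real_inner_self_eq_norm_sq]
      have h2 := norm_sub_sq_real (A v) v
      have h3 : ‖A v - v‖ ^ 2 ≤ 0 := by nlinarith [norm_nonneg (A v), norm_nonneg v]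
      have h4 : ‖A v - v‖ = 0 := by nlinarith [norm_nonneg (A v - v)]
      exact sub_eq_zero.mp (norm_eq_zero.mp h4)
    calc ⟪v, L u⟫ = ⟪A v, u⟫ := by rw [hA, ContinuousLinearMap.adjoint_inner_left]
      _ = ⟪v, u⟫ := by rw [hAv]
  -- fixed points of L are orthogonal to q
  have hvq : ∀ v : X, L v = v → ⟪v, q⟫ = 0 := by
    intro v hv
    have : q = z₀ - L z₀ := by rw [eq_sub_iff_add_eq, add_comm]; exact hz₀'
    rw [this, inner_sub_right, hadj v hv z₀, sub_self]
  -- the key orthogonality, by induction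
  have key : ∀ v : X, L v = v → ∀ k,
      ⟪v, r k⟫ = 0 ∧ ⟪v, x k - T^[k] (x 0)⟫ = 0 := by
    intro v hv
    intro k
    induction k with
    | zero => simp [hr0]
    | succ n ih =>
      obtain ⟨hg, hf⟩ := ih
      have hxn : x (n + 1) = L (x n) + L (r n) + q := by
        rw [hx n, hT, map_add]
      have hstep : ⟪v, x (n + 1) - x n⟫ = 0 := by
        rw [hxn]
        rw [show L (x n) + L (r n) + q - x n = (L (x n) - x n) + L (r n) + q by abel]
        rw [inner_add_right, inner_add_right, inner_sub_right, hadj v hv (x n),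
          hadj v hv (r n), hg, hvq v hv, sub_self]
        ring
      constructor
      · rw [hr n, real_inner_smul_right, hstep, mul_zero]
      · have hyn : T^[n + 1] (x 0) = L (T^[n] (x 0)) + q := by
          rw [Function.iterate_succ_apply', hT]
        rw [hxn, hyn]
        rw [show L (x n) + L (r n) + q - (L (T^[n] (x 0)) + q)
            = (L (x n) - L (T^[n] (x 0))) + L (r n) by abel]
        rw [inner_add_right, ← map_sub, hadj v hv (x n - T^[n] (x 0)),
          hadj v hv (r n), hf, hg, add_zero]
  intro k z
  set y := T^[k] (x 0) with hy
  set d := x k - y with hd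
  -- difference of squared distances to fixed points is the same for x k and y
  have hsq : ∀ z' w : X, T z' = z' → T w = w →
      ‖x k - z'‖ ^ 2 - ‖x k - w‖ ^ 2 = ‖y - z'‖ ^ 2 - ‖y - w‖ ^ 2 := by
    intro z' w hz' hw
    have hLfix : L (w - z') = w - z' := by
      rw [hT] at hz' hw
      rw [map_sub]
      have e1 : L w = w - q := by rw [eq_sub_iff_add_eq]; exact hw
      have e2 : L z' = z' - q := by rw [eq_sub_iff_add_eq]; exact hz'
      rw [e1, e2]; abel
    have hdo : ⟪w - z', d⟫ = 0 := (key (w - z') hLfix k).2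
    have e1 := norm_add_sq_real (y - z') d
    have e2 := norm_add_sq_real (y - w) d
    have e3 : y - z' + d = x k - z' := by rw [hd]; abel
    have e4 : y - w + d = x k - w := by rw [hd]; abel
    rw [e3] at e1; rw [e4] at e2
    have e5 : ⟪y - z', d⟫ - ⟪y - w, d⟫ = ⟪w - z', d⟫ := by
      rw [← inner_sub_left]
      congr 1
      abel
    linarith
  constructor
  · rintro ⟨hz, hmin⟩
    refine ⟨hz, fun w hw => ?_⟩
    have h1 := hmin w hw
    have h2 := hsq z w hz hw
    nlinarith [norm_nonneg (x k - z), norm_nonneg (x k - w), norm_nonneg (y - z), norm_nonneg (y - w)]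
  · rintro ⟨hz, hmin⟩
    refine ⟨hz, fun w hw => ?_⟩
    have h1 := hmin w hw
    have h2 := hsq z w hz hw
    nlinarith [norm_nonneg (x k - z), norm_nonneg (x k - w), norm_nonneg (y - z), norm_nonneg (y - w)]
end

section
/- Let X, Y be real Hilbert spaces, U a closed linear subspace of X, A : X → Y bounded linear with closed range, and suppose U + ker A is closed. Then there exists C ≥ 0 such that for every x ∈ U, dist(x, ker A ∩ U) ≤ C ‖A x‖. -/
open Pointwise

theorem stmt_13 {X Y : Type*} [NormedAddCommGroup X] [InnerProductSpace ℝ X]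
    [CompleteSpace X] [NormedAddCommGroup Y] [InnerProductSpace ℝ Y]
    [CompleteSpace Y] (U : Submodule ℝ X) (hU : IsClosed (U : Set X))
    (A : X →L[ℝ] Y) (hran : IsClosed (Set.range A))
    (hsum : IsClosed ((U : Set X) + (LinearMap.ker (A : X →ₗ[ℝ] Y) : Set X))) :
    ∃ C : ℝ, 0 ≤ C ∧ ∀ x ∈ U,
      Metric.infDist x ((LinearMap.ker (A : X →ₗ[ℝ] Y) : Set X) ∩ (U : Set X)) ≤ C * ‖A x‖ := by
  classical
  set W : Submodule ℝ X := U ⊔ LinearMap.ker (A : X →ₗ[ℝ] Y) with hWdef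
  have hWset : (W : Set X) = (U : Set X) + (LinearMap.ker (A : X →ₗ[ℝ] Y) : Set X) := by
    rw [hWdef, Submodule.coe_sup]
  have hWclosed : IsClosed (W : Set X) := by rw [hWset]; exact hsum
  have hranset : ((LinearMap.range (A : X →ₗ[ℝ] Y) : Submodule ℝ Y) : Set Y) = Set.range A :=
    LinearMap.coe_range (A : X →ₗ[ℝ] Y)
  have hranclosed : IsClosed ((LinearMap.range (A : X →ₗ[ℝ] Y) : Submodule ℝ Y) : Set Y) := by
    rw [hranset]; exact hran
  haveI : CompleteSpace (LinearMap.range (A : X →ₗ[ℝ] Y)) := hranclosed.completeSpace_coe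
  set A₀ : X →L[ℝ] (LinearMap.range (A : X →ₗ[ℝ] Y)) :=
    A.codRestrict (LinearMap.range (A : X →ₗ[ℝ] Y)) (fun x => LinearMap.mem_range_self _ x) with hA₀def
  have hA₀surj : Function.Surjective A₀ := by
    rintro ⟨y, x, rfl⟩
    exact ⟨x, rfl⟩
  have hA₀open : IsOpenMap A₀ := A₀.isOpenMap hA₀surj
  -- preimage of image of W under A₀ is W
  have hpre : A₀ ⁻¹' (A₀ '' (W : Set X)) = (W : Set X) := by
    ext x
    constructor
    · rintro ⟨w, hw, hwx⟩
      have hker : x - w ∈ LinearMap.ker (A : X →ₗ[ℝ] Y) := by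
        have : A₀ x = A₀ w := hwx.symm
        have : A x = A w := congrArg Subtype.val this
        simp [LinearMap.mem_ker, map_sub, this]
      have hkW : x - w ∈ W := Submodule.mem_sup_right hker
      have := W.add_mem hw hkW
      simpa using this
    · intro hx; exact ⟨x, hx, rfl⟩
  have himW : IsClosed (A₀ '' (W : Set X)) := by
    rw [← isOpen_compl_iff]
    have hcompl : (A₀ '' (W : Set X))ᶜ = A₀ '' ((W : Set X)ᶜ) := by
      ext y
      constructor
      · intro hy
        obtain ⟨x, rfl⟩ := hA₀surj y
        refine ⟨x, ?_, rfl⟩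
        intro hxW
        exact hy ⟨x, hxW, rfl⟩
      · rintro ⟨x, hx, rfl⟩ hy
        have : x ∈ A₀ ⁻¹' (A₀ '' (W : Set X)) := hy
        rw [hpre] at this
        exact hx this
    rw [hcompl]
    exact hA₀open _ hWclosed.isOpen_compl
  have hAWclosed : IsClosed (A '' (W : Set X)) := by
    have : A '' (W : Set X) = Subtype.val '' (A₀ '' (W : Set X)) := by
      rw [Set.image_image]; rfl
    rw [this]
    exact hranclosed.isClosedEmbedding_subtypeVal.isClosedMap _ himW
  -- restriction to U
  haveI : CompleteSpace U := hU.completeSpace_coe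
  set B : U →L[ℝ] Y := A.comp (Submodule.subtypeL U) with hBdef
  have hrangeB : Set.range B = A '' (U : Set X) := by
    ext y
    constructor
    · rintro ⟨u, rfl⟩; exact ⟨u, u.2, rfl⟩
    · rintro ⟨x, hx, rfl⟩; exact ⟨⟨x, hx⟩, rfl⟩
  have hAU : A '' (U : Set X) = A '' (W : Set X) := by
    apply Set.Subset.antisymm
    · exact Set.image_mono (by rw [hWdef]; exact SetLike.coe_subset_coe.mpr le_sup_left)
    · rintro y ⟨w, hw, rfl⟩
      rw [hWdef] at hw
      obtain ⟨u, hu, v, hv, rfl⟩ := Submodule.mem_sup.mp hw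
      refine ⟨u, hu, ?_⟩
      rw [LinearMap.mem_ker] at hv
      simp [map_add, hv]; exact hv
  have hrangeBclosed : IsClosed ((LinearMap.range (B : U →ₗ[ℝ] Y) : Submodule ℝ Y) : Set Y) := by
    rw [LinearMap.coe_range, ContinuousLinearMap.coe_coe, hrangeB, hAU]
    exact hAWclosed
  haveI : CompleteSpace (LinearMap.range (B : U →ₗ[ℝ] Y)) := hrangeBclosed.completeSpace_coe
  set B₀ : U →L[ℝ] (LinearMap.range (B : U →ₗ[ℝ] Y)) :=
    B.codRestrict (LinearMap.range (B : U →ₗ[ℝ] Y)) (fun x => LinearMap.mem_range_self _ x) with hB₀def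
  have hB₀surj : Function.Surjective B₀ := by
    rintro ⟨y, u, rfl⟩
    exact ⟨u, rfl⟩
  obtain ⟨C, hCpos, hC⟩ := B₀.exists_preimage_norm_le hB₀surj
  refine ⟨C, le_of_lt hCpos, ?_⟩
  intro x hx
  have hmem : A x ∈ LinearMap.range (B : U →ₗ[ℝ] Y) := ⟨⟨x, hx⟩, rfl⟩
  obtain ⟨u, hu, hun⟩ := hC ⟨A x, hmem⟩
  have hBu : A (u : X) = A x := congrArg Subtype.val hu
  have hnormy : ‖(⟨A x, hmem⟩ : LinearMap.range (B : U →ₗ[ℝ] Y))‖ = ‖A x‖ := rfl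
  rw [hnormy] at hun
  have hxy : x - (u : X) ∈ (LinearMap.ker (A : X →ₗ[ℝ] Y) : Set X) ∩ (U : Set X) := by
    constructor
    · simp [LinearMap.mem_ker, map_sub, hBu]
    · exact U.sub_mem hx u.2
  calc Metric.infDist x ((LinearMap.ker (A : X →ₗ[ℝ] Y) : Set X) ∩ (U : Set X))
      ≤ dist x (x - (u : X)) := Metric.infDist_le_dist_of_mem hxy
    _ = ‖(u : X)‖ := by simp [dist_eq_norm]
    _ = ‖u‖ := rfl
    _ ≤ C * ‖A x‖ := hun
end

section
/- Let U and V be closed affine subspaces of a real Hilbert space X. Then U + V is closed if and only if par U + par V is closed, where par U := U − U and par V := V − V are the parallel (direction) subspaces. -/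
open Pointwise

theorem stmt_15 {X : Type*} [NormedAddCommGroup X] [InnerProductSpace ℝ X]
    [CompleteSpace X] (U V : AffineSubspace ℝ X)
    (hUne : (U : Set X).Nonempty) (hVne : (V : Set X).Nonempty)
    (hUcl : IsClosed (U : Set X)) (hVcl : IsClosed (V : Set X)) :
    IsClosed ((U : Set X) + (V : Set X)) ↔
      IsClosed ((U.direction : Set X) + (V.direction : Set X)) := by
  obtain ⟨u, hu⟩ := hUne
  obtain ⟨v, hv⟩ := hVne
  have hset : (U : Set X) + (V : Set X) =
      (fun x => (u + v) + x) '' ((U.direction : Set X) + (V.direction : Set X)) := by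
    ext x
    constructor
    · rintro ⟨a, ha, b, hb, rfl⟩
      exact ⟨(a - u) + (b - v), ⟨a - u, AffineSubspace.vsub_mem_direction ha hu, b - v,
        AffineSubspace.vsub_mem_direction hb hv, rfl⟩, by abel⟩
    · rintro ⟨_, ⟨p, hp, q, hq, rfl⟩, rfl⟩
      refine ⟨p + u, ?_, q + v, ?_, by dsimp only; abel⟩
      · exact AffineSubspace.vadd_mem_of_mem_direction hp hu
      · exact AffineSubspace.vadd_mem_of_mem_direction hq hv
  rw [hset]
  exact (Homeomorph.addLeft (u + v)).isClosed_image
end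

section
/- Let X be a real Hilbert space, Y a real Hilbert space, A : X → Y bounded linear, b ∈ Y, U a closed affine subspace of X, and set f(x) = ½‖Ax − b‖², F = f + ι_U, S = Argmin F. If S ≠ ∅ then par S := S − S = ker A ∩ par U. -/
theorem stmt_16 {X Y : Type*} [NormedAddCommGroup X] [InnerProductSpace ℝ X]
    [CompleteSpace X] [NormedAddCommGroup Y] [InnerProductSpace ℝ Y]
    [CompleteSpace Y] (A : X →L[ℝ] Y) (b : Y)
    (U : AffineSubspace ℝ X) (hUne : (U : Set X).Nonempty)
    (hUcl : IsClosed (U : Set X))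
    (f : X → ℝ) (hf : ∀ x, f x = (1 / 2) * ‖A x - b‖ ^ 2)
    (S : Set X) (hS : S = {x | x ∈ U ∧ ∀ y ∈ U, f x ≤ f y})
    (hSne : S.Nonempty) :
    {z : X | ∃ u ∈ S, ∃ v ∈ S, z = u - v} =
      (LinearMap.ker (A : X →ₗ[ℝ] Y) : Set X) ∩ (U.direction : Set X) := by
  ext z
  simp only [Set.mem_setOf_eq, Set.mem_inter_iff, SetLike.mem_coe, LinearMap.mem_ker,
    ContinuousLinearMap.coe_coe]
  constructor
  · rintro ⟨u, hu, v, hv, rfl⟩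
    rw [hS] at hu hv
    obtain ⟨huU, humin⟩ := hu
    obtain ⟨hvU, hvmin⟩ := hv
    have hfeq : f u = f v := le_antisymm (humin v hvU) (hvmin u huU)
    have hm : ((1:ℝ)/2) • (v - u) + u ∈ U := by
      have := U.smul_vsub_vadd_mem ((1:ℝ)/2) hvU huU huU
      simpa [vsub_eq_sub, vadd_eq_add] using this
    set a := A u - b with ha
    set c := A v - b with hc
    have hkey : f u ≤ f (((1:ℝ)/2) • (v - u) + u) := humin _ hm
    have hAm : A (((1:ℝ)/2) • (v - u) + u) - b = ((1:ℝ)/2) • (a + c) := by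
      rw [ha, hc]
      simp only [map_add, map_smul, map_sub]
      module
    rw [hf, hf, hAm] at hkey
    have hfeq2 : ‖a‖ ^ 2 = ‖c‖ ^ 2 := by
      have := hfeq
      rw [hf, hf] at this
      linarith
    have hnac : ‖((1:ℝ)/2) • (a + c)‖ ^ 2 = (1/4) * ‖a + c‖ ^ 2 := by
      rw [norm_smul, Real.norm_eq_abs]
      rw [abs_of_nonneg (by norm_num : (0:ℝ) ≤ 1/2)]
      ring
    rw [hnac] at hkey
    have hadd : ‖a + c‖ ^ 2 = ‖a‖ ^ 2 + 2 * inner ℝ a c + ‖c‖ ^ 2 := norm_add_sq_real a c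
    have hsub : ‖a - c‖ ^ 2 = ‖a‖ ^ 2 - 2 * inner ℝ a c + ‖c‖ ^ 2 := norm_sub_sq_real a c
    have hzero : ‖a - c‖ ^ 2 ≤ 0 := by nlinarith
    have hac : a = c := by
      have : ‖a - c‖ = 0 := by
        have h1 : (0:ℝ) ≤ ‖a - c‖ := norm_nonneg _
        nlinarith
      rwa [norm_eq_zero, sub_eq_zero] at this
    have : A u = A v := by
      have := hac
      rw [ha, hc] at this
      exact sub_left_injective this
    constructor
    · rw [map_sub, this, sub_self]
    · exact AffineSubspace.vsub_mem_direction huU hvU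
  · rintro ⟨hzA, hzd⟩
    obtain ⟨u, hu⟩ := hSne
    have hu' := hu
    rw [hS] at hu'
    obtain ⟨huU, humin⟩ := hu'
    have hvU : u - z ∈ U := by
      have := AffineSubspace.vadd_mem_of_mem_direction (U.direction.neg_mem hzd) huU
      simpa [vadd_eq_add, sub_eq_neg_add] using this
    have hfv : f (u - z) = f u := by
      rw [hf, hf, map_sub, hzA, sub_zero]
    have hvS : u - z ∈ S := by
      rw [hS]
      exact ⟨hvU, fun y hy => hfv ▸ humin y hy⟩
    exact ⟨u, hu, u - z, hvS, by abel⟩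
end
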